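/- Let n ≥ 2 and S ⊆ ℤ^n. Then S is closed under the median operation if and only if S = ⋈_{1≤i<j≤n} cl_median(π_{i,j}(S)). -/

import Mathlib

/-- Componentwise closedness of a set of `ι`-indexed integer vectors under a
`k`-ary operation `f : ℤ^k → ℤ`. -/
def CptClosed {k : ℕ} {ι : Type*} (f : (Fin k → ℤ) → ℤ) (S : Set (ι → ℤ)) : Prop :=
  ∀ x : Fin k → ι → ℤ, (∀ l, x l ∈ S) → (fun i => f (fun l => x l i)) ∈ S

/-- `f : ℤ³ → ℤ` is a majority operation. -/
def IsMajorityOp (f : (Fin 3 → ℤ) → ℤ) : Prop :=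
  ∀ a b : ℤ, f ![a, a, b] = a ∧ f ![a, b, a] = a ∧ f ![b, a, a] = a

/-- `S` is closed under some majority operation. -/
def MajClosed {ι : Type*} (S : Set (ι → ℤ)) : Prop :=
  ∃ f : (Fin 3 → ℤ) → ℤ, IsMajorityOp f ∧ CptClosed f S

/-- The projection `π_{i,j}(x) = (x_i, x_j)`. -/
def proj2 {n : ℕ} (i j : Fin n) (x : Fin n → ℤ) : Fin 2 → ℤ := ![x i, x j]

/-- The projection `π_{i,j}(S)`. -/
def projSet {n : ℕ} (i j : Fin n) (S : Set (Fin n → ℤ)) : Set (Fin 2 → ℤ) :=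
  proj2 i j '' S

/-- The join `⋈_{1 ≤ i < j ≤ n} F i j`. -/
def joinPairs {n : ℕ} (F : Fin n → Fin n → Set (Fin 2 → ℤ)) : Set (Fin n → ℤ) :=
  {x | ∀ i j : Fin n, i < j → proj2 i j x ∈ F i j}

/-- The `f`-closure of `S`: the intersection of all `f`-closed supersets of `S`. -/
def clOp {k m : ℕ} (f : (Fin k → ℤ) → ℤ) (S : Set (Fin m → ℤ)) : Set (Fin m → ℤ) :=
  ⋂₀ {T | S ⊆ T ∧ CptClosed f T}

/-- The directed discrete midpoint operation `μ`. -/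
def muOp : (Fin 2 → ℤ) → ℤ := fun t =>
  if t 1 ≤ t 0 then ⌈((t 0 + t 1 : ℤ) : ℚ) / 2⌉ else ⌊((t 0 + t 1 : ℤ) : ℚ) / 2⌋

/-- The operation `g(x,y) = ⌈(x+y)/2⌉`. -/
def ceilAvgOp : (Fin 2 → ℤ) → ℤ := fun t => ⌈((t 0 + t 1 : ℤ) : ℚ) / 2⌉

/-- The operation `h(x,y) = ⌊(x+y)/2⌋`. -/
def floorAvgOp : (Fin 2 → ℤ) → ℤ := fun t => ⌊((t 0 + t 1 : ℤ) : ℚ) / 2⌋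

/-- The median operation on three integers. -/
def medianOp : (Fin 3 → ℤ) → ℤ := fun t =>
  max (max (min (t 0) (t 1)) (min (t 1) (t 2))) (min (t 0) (t 2))

/-- The canonical embedding `ℤ^m → ℝ^m`. -/
def toR {m : ℕ} (z : Fin m → ℤ) : Fin m → ℝ := fun l => (z l : ℝ)

/-- The integer neighborhood `N(x)` of a real vector `x`. -/
def intNbhd {m : ℕ} (x : Fin m → ℝ) : Set (Fin m → ℤ) :=
  {z | ∀ j, |(z j : ℝ) - x j| < 1}

/-- `S` is midpoint-neighbor-closed: for all `x, y ∈ S`, `N((x+y)/2) ⊆ S`. -/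
def MidpointNeighborClosed {m : ℕ} (S : Set (Fin m → ℤ)) : Prop :=
  ∀ x ∈ S, ∀ y ∈ S, ∀ z : Fin m → ℤ,
    (∀ j, |(z j : ℝ) - ((x j : ℝ) + (y j : ℝ)) / 2| < 1) → z ∈ S

/-- `S ⊆ ℤ^m` is integrally convex. -/
def IntegrallyConvex {m : ℕ} (S : Set (Fin m → ℤ)) : Prop :=
  ∀ x : Fin m → ℝ, x ∈ convexHull ℝ (toR '' S) →
    x ∈ convexHull ℝ (toR '' (S ∩ intNbhd x))

/-- The closed convex closure of `T ⊆ ℤ^m` inside `ℝ^m`: the intersection of all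
topologically closed convex sets containing `T`. -/
def closedConvexClosure {m : ℕ} (T : Set (Fin m → ℤ)) : Set (Fin m → ℝ) :=
  ⋂₀ {C : Set (Fin m → ℝ) | Convex ℝ C ∧ IsClosed C ∧ toR '' T ⊆ C}

/-- `S = cl_conv̄(S) ∩ ℤ^m`. -/
def ClosedConvexIntegral {m : ℕ} (S : Set (Fin m → ℤ)) : Prop :=
  S = {z : Fin m → ℤ | toR z ∈ closedConvexClosure S}

/-- All entries of `A` lie in `{0, -1, +1}`. -/
def UnitMatrix {mR n : ℕ} (A : Matrix (Fin mR) (Fin n) ℤ) : Prop :=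
  ∀ i j, A i j = 0 ∨ A i j = -1 ∨ A i j = 1

/-- Each row of `A` has at most `c` nonzero entries. -/
def RowSupportLE {mR n : ℕ} (A : Matrix (Fin mR) (Fin n) ℤ) (c : ℕ) : Prop :=
  ∀ i, {j | A i j ≠ 0}.ncard ≤ c

/-- `S` is representable by a UTVPI system. -/
def RepUTVPI {n : ℕ} (S : Set (Fin n → ℤ)) : Prop :=
  ∃ (mR : ℕ) (A : Matrix (Fin mR) (Fin n) ℤ) (b : Fin mR → ℝ),
    UnitMatrix A ∧ RowSupportLE A 2 ∧
    S = {x | ∀ i, b i ≤ ((∑ j, A i j * x j : ℤ) : ℝ)}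

/-- `S` is representable by an SVPI system. -/
def RepSVPI {n : ℕ} (S : Set (Fin n → ℤ)) : Prop :=
  ∃ (mR : ℕ) (A : Matrix (Fin mR) (Fin n) ℤ) (b : Fin mR → ℝ),
    UnitMatrix A ∧ RowSupportLE A 1 ∧
    S = {x | ∀ i, b i ≤ ((∑ j, A i j * x j : ℤ) : ℝ)}

/-- `S` is representable by a DC system. -/
def RepDC {n : ℕ} (S : Set (Fin n → ℤ)) : Prop :=
  ∃ (mR : ℕ) (A : Matrix (Fin mR) (Fin n) ℤ) (b : Fin mR → ℝ),
    UnitMatrix A ∧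
    (∀ i, {j | A i j = 1}.ncard ≤ 1) ∧ (∀ i, {j | A i j = -1}.ncard ≤ 1) ∧
    S = {x | ∀ i, b i ≤ ((∑ j, A i j * x j : ℤ) : ℝ)}

/-- `S` is representable by a TVPI system with possibly infinitely many inequalities. -/
def RepTVPIInf {n : ℕ} (S : Set (Fin n → ℤ)) : Prop :=
  ∃ (I : Type) (a1 a2 b : I → ℝ) (p q : I → Fin n),
    S = {x | ∀ i : I, b i ≤ a1 i * (x (p i) : ℝ) + a2 i * (x (q i) : ℝ)}

/-- `S` is 2-decomposable: `S = ⋈_{i<j} π_{i,j}(S)`. -/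
def TwoDecomposable {ι : Type*} [LinearOrder ι] (S : Set (ι → ℤ)) : Prop :=
  S = {x | ∀ i j : ι, i < j → ∃ s ∈ S, s i = x i ∧ s j = x j}

lemma med_two (g : Fin 3 → ℤ) (a : ℤ)
    (h : (g 0 = a ∧ g 1 = a) ∨ (g 0 = a ∧ g 2 = a) ∨ (g 1 = a ∧ g 2 = a)) :
    medianOp g = a := by
  unfold medianOp; omega

lemma subset_clOp {k m : ℕ} (f : (Fin k → ℤ) → ℤ) (S : Set (Fin m → ℤ)) :
    S ⊆ clOp f S := fun x hx => Set.mem_sInter.mpr fun _ hT => hT.1 hx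

lemma clOp_closed {k m : ℕ} (f : (Fin k → ℤ) → ℤ) (S : Set (Fin m → ℤ)) :
    CptClosed f (clOp f S) := by
  intro x hx
  refine Set.mem_sInter.mpr fun T hT => ?_
  exact hT.2 x fun l => Set.mem_sInter.mp (hx l) T hT

lemma clOp_eq_self {k m : ℕ} {f : (Fin k → ℤ) → ℤ} {S : Set (Fin m → ℤ)}
    (h : CptClosed f S) : clOp f S = S :=
  subset_antisymm
    (fun x hx => Set.mem_sInter.mp hx S
      (show S ⊆ S ∧ CptClosed f S from ⟨subset_rfl, h⟩))
    (subset_clOp f S)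

lemma projSet_closed {n : ℕ} (i j : Fin n) {S : Set (Fin n → ℤ)}
    (hS : CptClosed medianOp S) : CptClosed medianOp (projSet i j S) := by
  intro x hx
  choose s hsS hsp using hx
  have hxe : x = fun l => proj2 i j (s l) := funext fun l => (hsp l).symm
  subst hxe
  refine (Set.mem_image _ _ _).mpr ⟨fun m => medianOp (fun l => s l m), hS s hsS, ?_⟩
  funext m
  fin_cases m <;> simp [proj2]

lemma joinPairs_closed {n k : ℕ} (f : (Fin k → ℤ) → ℤ)
    (F : Fin n → Fin n → Set (Fin 2 → ℤ)) (hF : ∀ i j, CptClosed f (F i j)) :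
    CptClosed f (joinPairs F) := by
  intro x hx i j hij
  have h := hF i j (fun l => proj2 i j (x l)) (fun l => hx l i j hij)
  have he : (fun m => f (fun l => proj2 i j (x l) m)) =
      proj2 i j (fun i' => f (fun l => x l i')) := by
    funext m
    fin_cases m <;> simp [proj2]
  rwa [he] at h

lemma median_key {n : ℕ} (hn : 2 ≤ n) {S : Set (Fin n → ℤ)} (hS : CptClosed medianOp S)
    (x : Fin n → ℤ) (hx : ∀ i j : Fin n, i ≠ j → ∃ s ∈ S, s i = x i ∧ s j = x j) :
    x ∈ S := by
  haveI : Nontrivial (Fin n) := Fin.nontrivial_iff_two_le.mpr hn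
  have main : ∀ k (I : Finset (Fin n)), I.card ≤ k → ∃ s ∈ S, ∀ i ∈ I, s i = x i := by
    intro k
    induction k with
    | zero =>
      intro I hI
      have hIe : I = ∅ := Finset.card_eq_zero.mp (Nat.le_zero.mp hI)
      obtain ⟨s, hs, _⟩ := hx ⟨0, by omega⟩ ⟨1, by omega⟩ (by simp [Fin.ext_iff])
      exact ⟨s, hs, fun i hi => by simp [hIe] at hi⟩
    | succ k IH =>
      intro I hI
      rcases Nat.lt_or_ge I.card (k + 1) with h | h
      · exact IH I (by omega)
      have hcard : I.card = k + 1 := le_antisymm hI h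
      by_cases h2 : I.card ≤ 2
      · -- small case: I ⊆ {i, j} for some i ≠ j
        have hsmall : ∃ i j : Fin n, i ≠ j ∧ ∀ m ∈ I, m = i ∨ m = j := by
          interval_cases hc : I.card
          · simp at hcard
          · obtain ⟨i, hi⟩ := Finset.card_eq_one.mp hc
            obtain ⟨j, hj⟩ := exists_ne i
            exact ⟨i, j, fun h => hj h.symm, fun m hm => Or.inl (by simpa [hi] using hm)⟩
          · obtain ⟨i, j, hij, hI2⟩ := Finset.card_eq_two.mp hc
            refine ⟨i, j, hij, fun m hm => ?_⟩
            simpa [hI2] using hm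
        obtain ⟨i, j, hij, hsub⟩ := hsmall
        obtain ⟨s, hs, hsi, hsj⟩ := hx i j hij
        refine ⟨s, hs, fun m hm => ?_⟩
        rcases hsub m hm with rfl | rfl
        · exact hsi
        · exact hsj
      · -- big case: I.card ≥ 3, median step
        have h3 : 3 ≤ I.card := by omega
        obtain ⟨a, ha⟩ := Finset.card_pos.mp (show 0 < I.card by omega)
        have hca : (I.erase a).card = k := by
          rw [Finset.card_erase_of_mem ha]; omega
        obtain ⟨b, hb⟩ := Finset.card_pos.mp (show 0 < (I.erase a).card by omega)
        obtain ⟨c, hc⟩ := Finset.card_pos.mp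
          (show 0 < ((I.erase a).erase b).card by
            rw [Finset.card_erase_of_mem hb]; omega)
        have hbI : b ∈ I := Finset.mem_of_mem_erase hb
        have hba : b ≠ a := Finset.ne_of_mem_erase hb
        have hcb : c ≠ b := Finset.ne_of_mem_erase hc
        have hcIa : c ∈ I.erase a := Finset.mem_of_mem_erase hc
        have hca' : c ≠ a := Finset.ne_of_mem_erase hcIa
        have hcI : c ∈ I := Finset.mem_of_mem_erase hcIa
        obtain ⟨s1, hs1S, hs1⟩ := IH (I.erase a) (by omega)
        obtain ⟨s2, hs2S, hs2⟩ := IH (I.erase b)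
          (by rw [Finset.card_erase_of_mem hbI]; omega)
        obtain ⟨s3, hs3S, hs3⟩ := IH (I.erase c)
          (by rw [Finset.card_erase_of_mem hcI]; omega)
        have hmem := hS ![s1, s2, s3] (by
          intro l; fin_cases l <;> simpa)
        refine ⟨_, hmem, fun i hi => ?_⟩
        show medianOp (fun l => ![s1, s2, s3] l i) = x i
        apply med_two
        simp only [Matrix.cons_val_zero, Matrix.cons_val_one, Matrix.head_cons,
          Matrix.cons_val_two, Matrix.tail_cons]
        by_cases hia : i = a
        · subst hia
          exact Or.inr (Or.inr ⟨hs2 i (Finset.mem_erase.mpr ⟨hba.symm, hi⟩),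
            hs3 i (Finset.mem_erase.mpr ⟨hca'.symm, hi⟩)⟩)
        · by_cases hib : i = b
          · subst hib
            exact Or.inr (Or.inl ⟨hs1 i (Finset.mem_erase.mpr ⟨hia, hi⟩),
              hs3 i (Finset.mem_erase.mpr ⟨hcb.symm, hi⟩)⟩)
          · exact Or.inl ⟨hs1 i (Finset.mem_erase.mpr ⟨hia, hi⟩),
              hs2 i (Finset.mem_erase.mpr ⟨hib, hi⟩)⟩
  obtain ⟨s, hs, hsx⟩ := main n Finset.univ (by simp)
  have : s = x := funext fun i => hsx i (Finset.mem_univ i)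
  rwa [← this]

/-- `S` is median-closed iff `S = ⋈_{i<j} cl_median(π_{i,j}(S))`. -/
theorem stmt_10 {n : ℕ} (hn : 2 ≤ n) (S : Set (Fin n → ℤ)) :
    CptClosed medianOp S ↔
      S = joinPairs (fun i j => clOp medianOp (projSet i j S)) := by
  constructor
  · intro hS
    apply subset_antisymm
    · intro x hx i j hij
      exact subset_clOp _ _ (Set.mem_image_of_mem _ hx)
    · intro x hx
      apply median_key hn hS
      have hpair : ∀ i j : Fin n, i < j → ∃ s ∈ S, s i = x i ∧ s j = x j := by
        intro i j hij
        have h : proj2 i j x ∈ clOp medianOp (projSet i j S) := hx i j hij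
        rw [clOp_eq_self (projSet_closed i j hS)] at h
        obtain ⟨s, hs, hsp⟩ := h
        refine ⟨s, hs, ?_, ?_⟩
        · have := congrFun hsp 0; simpa [proj2] using this
        · have := congrFun hsp 1; simpa [proj2] using this
      intro i j hij
      rcases lt_or_gt_of_ne hij with h | h
      · exact hpair i j h
      · obtain ⟨s, hs, h1, h2⟩ := hpair j i h
        exact ⟨s, hs, h2, h1⟩
  · intro h
    rw [h]
    exact joinPairs_closed _ _ fun i j => clOp_closed _ _
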